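/- (Example 4.1, negative part: failure of person-by-person optimality under the policy-dependent static reduction.) Fix α ∈ (0,1) and fix DM2's dynamic policy γ₂*(y, t) = t, so that DM2's action is u² = ω₂ + u¹. Then: (a) for every t ∈ ℝ, the constant DM1 policy γ₁ ≡ t gives a dynamic-cost integrand equal to −α·t² pointwise, so J^D(t, γ₂*) = −α·t²; (b) consequently, for every M ∈ ℝ there is a measurable γ₁ : ℝ → ℝ with J^D(γ₁, γ₂*) < M, i.e., the infimum of J^D(·, γ₂*) over measurable DM1 policies is −∞; hence (c) the pair (γ₁* ≡ 0, γ₂*), which corresponds under the policy-dependent static reduction to the person-by-person optimal static policy (0, (y,s) ↦ s), is not person-by-person optimal for the dynamic team (P^D), since J^D(0, γ₂*) = 0 > J^D(t, γ₂*) for every t ≠ 0. -/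

import Mathlib

open MeasureTheory

/-- **Example 4.1 (negative part): failure of person-by-person optimality under the
policy-dependent static reduction.** With the cost
`c (ω₂, u¹, u²) = (u¹ − u² + ω₂)² − α (u¹)²`, `α ∈ (0,1)`, and DM2's dynamic policy
`γ₂* (y, t) = t` (so `u² = ω₂ + u¹`): constant DM1 policies `t` give dynamic cost
`−α t²`, the infimum of `J^D (·, γ₂*)` over measurable DM1 policies is `−∞`, and the
pair `(γ₁* ≡ 0, γ₂*)` is not person-by-person optimal for the dynamic team `(P^D)`. -/
theorem example41_negative
    {Ω : Type*} [MeasurableSpace Ω] (P : Measure Ω) [IsProbabilityMeasure P]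
    (ω₁ ω₂ : Ω → ℝ) (hω₁ : Measurable ω₁) (hω₂ : Measurable ω₂)
    (α : ℝ) (hα : α ∈ Set.Ioo (0 : ℝ) 1)
    (c : ℝ → ℝ → ℝ → ℝ)
    (hc : ∀ w u₁ u₂, c w u₁ u₂ = (u₁ - u₂ + w) ^ 2 - α * u₁ ^ 2)
    (JD : (ℝ → ℝ) → (ℝ × ℝ → ℝ) → ℝ)
    (hJD : ∀ γ₁ γ₂, JD γ₁ γ₂
      = ∫ ω, c (ω₂ ω) (γ₁ (ω₁ ω)) (γ₂ (ω₁ ω, ω₂ ω + γ₁ (ω₁ ω))) ∂P) :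
    -- (a)
    (∀ t : ℝ,
      (∀ ω, c (ω₂ ω) t ((fun p : ℝ × ℝ => p.2) (ω₁ ω, ω₂ ω + t)) = -α * t ^ 2)
      ∧ JD (fun _ => t) (fun p => p.2) = -α * t ^ 2)
    -- (b)
    ∧ (∀ M : ℝ, ∃ γ₁ : ℝ → ℝ, Measurable γ₁ ∧ JD γ₁ (fun p => p.2) < M)
    -- (c)
    ∧ (∀ t : ℝ, t ≠ 0 →
        JD (fun _ => t) (fun p => p.2) < JD (fun _ => 0) (fun p => p.2))
    ∧ ¬ ((∀ γ₁ : ℝ → ℝ, Measurable γ₁ →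
            JD (fun _ => 0) (fun p => p.2) ≤ JD γ₁ (fun p => p.2))
        ∧ (∀ γ₂ : ℝ × ℝ → ℝ, Measurable γ₂ →
            JD (fun _ => 0) (fun p => p.2) ≤ JD (fun _ => 0) γ₂)) := by
  obtain ⟨hα0, hα1⟩ := hα
  have hkey : ∀ t : ℝ, JD (fun _ => t) (fun p => p.2) = -α * t ^ 2 := by
    intro t
    rw [hJD]
    have : (fun ω => c (ω₂ ω) t ((fun p : ℝ × ℝ => p.2) (ω₁ ω, ω₂ ω + t)))
        = fun _ => -α * t ^ 2 := by
      funext ω; rw [hc]; ring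
    rw [this, integral_const, probReal_univ]
    simp
  refine ⟨fun t => ⟨fun ω => by rw [hc]; ring, hkey t⟩, ?_, ?_, ?_⟩
  · intro M
    set t := Real.sqrt ((|M| + 1) / α) with ht
    refine ⟨fun _ => t, measurable_const, ?_⟩
    rw [hkey]
    have h1 : (0:ℝ) ≤ (|M| + 1) / α := by positivity
    have h2 : t ^ 2 = (|M| + 1) / α := Real.sq_sqrt h1
    rw [h2]
    have : α * ((|M| + 1) / α) = |M| + 1 := by field_simp
    rw [neg_mul, this]
    have := abs_nonneg M
    have := neg_abs_le M
    linarith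
  · intro t ht
    rw [hkey, hkey]
    have : 0 < α * t ^ 2 := by positivity
    nlinarith
  · rintro ⟨h1, _⟩
    have := h1 (fun _ => 1) measurable_const
    rw [hkey, hkey] at this
    nlinarith
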